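/- Let V₁,…,V_m be finite-dimensional ℂ-vector spaces and a_i : V_{i−1} → V_i (indices mod m, so a_1 : V_m → V_1) linear maps such that the composite a_m⋯a_1 : V_m → V_m is nilpotent. Define a_1' = Σ_{n≥1} ((2πi)^n/n!)·a_1(a_m⋯a_1)^{n−1} and a_1'' = (1/(2πi))·Σ_{n≥1} ((−1)^{n−1}/n)·a_1(a_m⋯a_1)^{n−1} (both sums finite by nilpotency). Then applying the construction a_1 ↦ a_1' followed by a_1 ↦ a_1'' (with a_i unchanged for i ≠ 1) recovers the original map a_1, and vice versa. -/

import Mathlib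

open scoped Real Nat
open Complex

/-- The 'exponential' construction on the arrow `a₁` of a representation of the cyclic
quiver `Q_m`: `a₁' = ∑_{n≥1} ((2πi)^n/n!) • a₁ (a_m⋯a₁)^{n-1}`, where `b = a_m⋯a₂` is the
composite of the remaining arrows around the cycle, so `a_m⋯a₁ = b * a₁`. -/
noncomputable def cqExp {d1 dm : ℕ} (b : Matrix (Fin dm) (Fin d1) ℂ)
    (a1 : Matrix (Fin d1) (Fin dm) ℂ) : Matrix (Fin d1) (Fin dm) ℂ :=
  ∑' k : ℕ, (((2 * π * I) ^ (k + 1) / ((k + 1)! : ℂ)) • (a1 * (b * a1) ^ k))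

/-- The 'logarithm' construction:
`a₁'' = (1/(2πi)) • ∑_{n≥1} ((-1)^{n-1}/n) • a₁ (a_m⋯a₁)^{n-1}`. -/
noncomputable def cqLog {d1 dm : ℕ} (b : Matrix (Fin dm) (Fin d1) ℂ)
    (a1 : Matrix (Fin d1) (Fin dm) ℂ) : Matrix (Fin d1) (Fin dm) ℂ :=
  (1 / (2 * π * I)) • ∑' k : ℕ, (((-1) ^ k / ((k + 1 : ℕ) : ℂ)) • (a1 * (b * a1) ^ k))

open Polynomial Finset

namespace CqAux

variable (c : ℂ) (N : ℕ)

noncomputable def Pe : ℂ[X] := ∑ k ∈ range N, C (c ^ (k+1) / ((k+1).factorial : ℂ)) * X ^ k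

noncomputable def Qe : ℂ[X] := ∑ k ∈ range N, C ((1/c) * ((-1) ^ k / ((k+1 : ℕ) : ℂ))) * X ^ k

lemma P_eq : X * Pe c N = ∑ k ∈ range N, C (c ^ (k+1) / ((k+1).factorial : ℂ)) * X ^ (k+1) := by
  rw [Pe, Finset.mul_sum]
  exact Finset.sum_congr rfl fun k _ => by ring

lemma Q_eq : X * Qe c N = ∑ k ∈ range N, C ((1/c) * ((-1) ^ k / ((k+1 : ℕ) : ℂ))) * X ^ (k+1) := by
  rw [Qe, Finset.mul_sum]
  exact Finset.sum_congr rfl fun k _ => by ring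

lemma derivative_P :
    derivative (X * Pe c N) = C c * (1 + X * Pe c N) - C (c ^ (N+1) / (N.factorial : ℂ)) * X ^ N := by
  have hd : derivative (X * Pe c N) = ∑ k ∈ range N, C (c ^ (k+1) / (k.factorial : ℂ)) * X ^ k := by
    rw [P_eq, map_sum]
    refine Finset.sum_congr rfl fun k _ => ?_
    rw [derivative_C_mul_X_pow]
    simp only [Nat.add_sub_cancel]
    congr 1
    have hfac : ((k+1).factorial : ℂ) = ((k:ℂ)+1) * (k.factorial : ℂ) := by
      rw [Nat.factorial_succ]; push_cast; ring
    have h2 : ((k).factorial : ℂ) ≠ 0 := Nat.cast_ne_zero.2 (Nat.factorial_ne_zero _)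
    have h3 : ((k:ℂ)+1) ≠ 0 := by exact_mod_cast Nat.succ_ne_zero k
    rw [hfac]
    push_cast
    field_simp
  have hc1 : C c * (1 + X * Pe c N) = ∑ k ∈ range (N+1), C (c ^ (k+1) / (k.factorial : ℂ)) * X ^ k := by
    rw [Finset.sum_range_succ', P_eq, mul_add, mul_one, Finset.mul_sum]
    rw [add_comm]
    congr 1
    · refine Finset.sum_congr rfl fun k _ => ?_
      rw [← mul_assoc, ← C_mul]
      congr 2
      have h1 : ((k+1).factorial : ℂ) ≠ 0 := Nat.cast_ne_zero.2 (Nat.factorial_ne_zero _)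
      field_simp
      ring
    · simp
  rw [hc1, Finset.sum_range_succ, hd]
  ring

lemma derivative_Q (hc : c ≠ 0) :
    C c * derivative (X * Qe c N) = ∑ k ∈ range N, (-X : ℂ[X]) ^ k := by
  rw [Q_eq, map_sum, Finset.mul_sum]
  refine Finset.sum_congr rfl fun k _ => ?_
  rw [derivative_C_mul_X_pow, ← mul_assoc, ← C_mul]
  have h2 : ((k : ℂ) + 1) ≠ 0 := by exact_mod_cast Nat.succ_ne_zero k
  have : c * (1/c * ((-1) ^ k / ((k+1 : ℕ) : ℂ)) * ((k+1 : ℕ) : ℂ)) = (-1) ^ k := by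
    push_cast
    field_simp
  rw [this]
  rw [neg_pow (X : ℂ[X]) k]
  simp [map_pow]

lemma geo : (1 + X) * (∑ k ∈ range N, (-X : ℂ[X]) ^ k) = 1 - C ((-1) ^ N) * X ^ N := by
  have h := geom_sum_mul (-X : ℂ[X]) N
  have h2 : ((-X : ℂ[X])) ^ N = C ((-1) ^ N) * X ^ N := by
    rw [neg_pow]
    simp [map_pow]
  linear_combination -h - h2



/-- Generic lemma A: if `F' = 1 - W*X^N` and `F(0)=0` then `F ≡ X` up to degree `N`. -/
lemma lemA (N : ℕ) (F W : ℂ[X]) (hder : derivative F = 1 - W * X ^ N)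
    (h0 : F.coeff 0 = 0) : ∀ j ≤ N, F.coeff j = (X : ℂ[X]).coeff j := by
  intro j hj
  rcases j with _ | j
  · simpa [coeff_X] using h0
  · have hjN : j < N := hj
    have E : (derivative F).coeff j = ((1 : ℂ[X]) - W * X ^ N).coeff j := by rw [hder]
    rw [coeff_derivative, coeff_sub, coeff_one, coeff_mul_X_pow',
      if_neg (not_le.2 hjN), sub_zero] at E
    rw [coeff_X]
    rcases Nat.eq_zero_or_pos j with rfl | hjpos
    · rw [if_pos rfl] at E
      rw [if_pos rfl]
      push_cast at E
      linear_combination E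
    · rw [if_neg (by omega)] at E
      rw [if_neg (by omega)]
      have hne : ((j : ℂ) + 1) ≠ 0 := by exact_mod_cast Nat.succ_ne_zero j
      exact (mul_eq_zero.1 E).resolve_right hne

/-- Generic lemma B: if `(1+X)·G' = (1+G) - W·X^N` and `G(0)=0` then `G ≡ X` up to degree `N`. -/
lemma lemB (N : ℕ) (G W : ℂ[X]) (hder : (1 + X) * derivative G = (1 + G) - W * X ^ N)
    (h0 : G.coeff 0 = 0) : ∀ j ≤ N, G.coeff j = (X : ℂ[X]).coeff j := by
  have key : ∀ j, j ≤ N → G.coeff j = (if 1 = j then 1 else 0) := by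
    intro j
    induction j with
    | zero => intro _; simpa using h0
    | succ j ih =>
      intro hjN
      have hj : j < N := hjN
      have E : ((1 + X) * derivative G).coeff j = ((1 + G) - W * X ^ N).coeff j := by
        rw [hder]
      rw [coeff_sub, coeff_mul_X_pow', if_neg (not_le.2 hj), sub_zero, add_mul, one_mul,
        coeff_add, coeff_add, coeff_one] at E
      rcases j with _ | s
      · -- E : dG.coeff 0 + (X * dG).coeff 0 = 1 + G.coeff 0
        rw [mul_coeff_zero, coeff_X_zero, zero_mul, add_zero, coeff_derivative, h0, add_zero] at E
        rw [if_pos rfl]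
        push_cast at E
        linear_combination E
      · rw [coeff_X_mul, coeff_derivative, coeff_derivative,
          if_neg (Nat.succ_ne_zero s)] at E
        -- E : G.coeff (s+1+1) * (↑(s+1)+1) + G.coeff (s+1) * (↑s+1) = 0 + G.coeff (s+1)
        have hval := ih (by omega)
        have hne : ((s : ℂ) + 1) + 1 ≠ 0 := by
          have : ((s : ℂ) + 1) + 1 = ((s + 2 : ℕ) : ℂ) := by push_cast; ring
          rw [this]
          exact_mod_cast Nat.succ_ne_zero (s + 1)
        rw [if_neg (by omega)]
        rcases Nat.eq_zero_or_pos s with rfl | hspos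
        · rw [if_pos rfl] at hval
          rw [hval] at E
          push_cast at E
          have : G.coeff 2 * ((1 : ℂ) + 1) = 0 := by linear_combination E
          have h2 : ((1 : ℂ) + 1) ≠ 0 := by norm_num
          exact (mul_eq_zero.1 this).resolve_right h2
        · rw [if_neg (by omega)] at hval
          rw [hval] at E
          have : G.coeff (s + 1 + 1) * (((s : ℂ) + 1) + 1) = 0 := by
            push_cast at E ⊢
            linear_combination E
          exact (mul_eq_zero.1 this).resolve_right hne
  intro j hj
  rw [key j hj, coeff_X]



lemma comp_QP (c : ℂ) (N : ℕ) (hc : c ≠ 0) :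
    ∀ j ≤ N, ((X * Qe c N).comp (X * Pe c N)).coeff j = (X : ℂ[X]).coeff j := by
  have hgeo : (1 + X) * (C c * derivative (X * Qe c N)) = 1 - C ((-1) ^ N) * X ^ N := by
    rw [derivative_Q c N hc]; exact geo N
  have hcompeq : (1 + X * Pe c N) * (C c * ((derivative (X * Qe c N)).comp (X * Pe c N)))
      = 1 - C ((-1) ^ N) * (X * Pe c N) ^ N := by
    have h := congrArg (fun r : ℂ[X] => r.comp (X * Pe c N)) hgeo
    simpa only [mul_comp, add_comp, one_comp, X_comp, C_comp, sub_comp, pow_comp] using h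
  have hPN : (X * Pe c N) ^ N = X ^ N * (Pe c N) ^ N := mul_pow _ _ _
  refine lemA N _ (C ((-1) ^ N) * (Pe c N) ^ N
      + C (c ^ (N+1) / (N.factorial : ℂ)) * ((derivative (X * Qe c N)).comp (X * Pe c N))) ?_ ?_
  · rw [derivative_comp, derivative_P c N]
    linear_combination hcompeq - C ((-1 : ℂ) ^ N) * hPN
  · rw [coeff_zero_eq_eval_zero, eval_comp]
    have h1 : eval 0 (X * Pe c N) = 0 := by simp
    rw [h1, ← coeff_zero_eq_eval_zero]
    simp [mul_coeff_zero]

lemma comp_PQ (c : ℂ) (N : ℕ) (hc : c ≠ 0) :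
    ∀ j ≤ N, ((X * Pe c N).comp (X * Qe c N)).coeff j = (X : ℂ[X]).coeff j := by
  have hgeo : (1 + X) * (C c * derivative (X * Qe c N)) = 1 - C ((-1) ^ N) * X ^ N := by
    rw [derivative_Q c N hc]; exact geo N
  have hPQcomp : (derivative (X * Pe c N)).comp (X * Qe c N)
      = C c * (1 + (X * Pe c N).comp (X * Qe c N))
        - C (c ^ (N+1) / (N.factorial : ℂ)) * (X * Qe c N) ^ N := by
    have h := congrArg (fun r : ℂ[X] => r.comp (X * Qe c N)) (derivative_P c N)
    simpa only [sub_comp, mul_comp, add_comp, one_comp, C_comp, X_pow_comp] using h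
  have hQN : (X * Qe c N) ^ N = X ^ N * (Qe c N) ^ N := mul_pow _ _ _
  refine lemB N _ (C ((-1) ^ N) * (1 + (X * Pe c N).comp (X * Qe c N))
      + (1 + X) * derivative (X * Qe c N) * C (c ^ (N+1) / (N.factorial : ℂ)) * (Qe c N) ^ N)
      ?_ ?_
  · rw [derivative_comp, hPQcomp]
    linear_combination (1 + (X*Pe c N).comp (X*Qe c N)) * hgeo
      - (1 + X) * derivative (X * Qe c N) * C (c^(N+1) / (N.factorial : ℂ)) * hQN
  · rw [coeff_zero_eq_eval_zero, eval_comp]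
    have h1 : eval 0 (X * Qe c N) = 0 := by simp
    rw [h1, ← coeff_zero_eq_eval_zero]
    simp [mul_coeff_zero]

section Matrices
variable {d1 dm : ℕ}

lemma shunt (a1 : Matrix (Fin d1) (Fin dm) ℂ) (b : Matrix (Fin dm) (Fin d1) ℂ) (k : ℕ) :
    a1 * (b * a1) ^ k = (a1 * b) ^ k * a1 := by
  induction k with
  | zero => simp
  | succ k ih =>
    rw [pow_succ, pow_succ, ← Matrix.mul_assoc, ih]
    simp only [Matrix.mul_assoc]

lemma natr (a1 : Matrix (Fin d1) (Fin dm) ℂ) (b : Matrix (Fin dm) (Fin d1) ℂ) (f : ℂ[X]) :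
    a1 * aeval (b * a1) f = aeval (a1 * b) f * a1 := by
  have h : f.natDegree < f.natDegree + 1 := Nat.lt_succ_self _
  rw [aeval_eq_sum_range' h, aeval_eq_sum_range' h, Matrix.mul_sum, Matrix.sum_mul]
  refine Finset.sum_congr rfl fun k _ => ?_
  rw [Matrix.mul_smul, Matrix.smul_mul, shunt]

lemma rep (a1 : Matrix (Fin d1) (Fin dm) ℂ) (b : Matrix (Fin dm) (Fin d1) ℂ)
    (N : ℕ) (h0 : (b * a1) ^ N = 0) (s : ℂ) (γ : ℕ → ℂ) :
    s • ∑' k : ℕ, γ k • (a1 * (b * a1) ^ k)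
      = aeval (a1 * b) (∑ k ∈ range N, C (s * γ k) * X ^ k) * a1 := by
  rw [tsum_eq_sum (s := Finset.range N)
    (fun k hk => by
      rw [pow_eq_zero_of_le (le_of_not_gt fun h => hk (Finset.mem_range.2 h)) h0]
      simp)]
  rw [map_sum, Matrix.sum_mul, Finset.smul_sum]
  refine Finset.sum_congr rfl fun k hk => ?_
  rw [smul_smul, map_mul, map_pow, aeval_C, aeval_X, Algebra.algebraMap_eq_smul_one,
    smul_mul_assoc, one_mul, Matrix.smul_mul, shunt]

lemma glue (a1 : Matrix (Fin d1) (Fin dm) ℂ) (b : Matrix (Fin dm) (Fin d1) ℂ)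
    (N : ℕ) (hN : 0 < N) (h0 : (b * a1) ^ N = 0)
    (s : ℂ) (γ : ℕ → ℂ) (pe qe : ℂ[X])
    (hqe : qe = ∑ k ∈ range N, C (s * γ k) * X ^ k)
    (hcomp : ∀ j ≤ N, ((X * qe).comp (X * pe)).coeff j = (X : ℂ[X]).coeff j) :
    s • ∑' k : ℕ, γ k • ((aeval (a1 * b) pe * a1) * (b * (aeval (a1 * b) pe * a1)) ^ k)
      = a1 := by
  have hb : b * (aeval (a1 * b) pe * a1) = aeval (b * a1) (X * pe) := by
    rw [mul_comm (X : ℂ[X]) pe, map_mul, aeval_X, ← Matrix.mul_assoc, natr b a1 pe,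
      Matrix.mul_assoc]
  have hvanish : ∀ k ∉ Finset.range N,
      γ k • ((aeval (a1 * b) pe * a1) * (b * (aeval (a1 * b) pe * a1)) ^ k) = 0 := by
    intro k hk
    have hkN : N ≤ k := le_of_not_gt fun h => hk (Finset.mem_range.2 h)
    rw [hb, ← map_pow, mul_pow, map_mul, map_pow, aeval_X,
      pow_eq_zero_of_le hkN h0, zero_mul, Matrix.mul_zero, smul_zero]
  rw [tsum_eq_sum hvanish, Finset.smul_sum]
  have hterm : ∀ k, s • γ k • ((aeval (a1 * b) pe * a1) * (b * (aeval (a1 * b) pe * a1)) ^ k)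
      = aeval (a1 * b) (C (s * γ k) * (pe * (X * pe) ^ k)) * a1 := by
    intro k
    rw [smul_smul, hb, ← map_pow, Matrix.mul_assoc, natr a1 b ((X * pe) ^ k),
      ← Matrix.mul_assoc, map_mul (aeval (a1 * b)) (C (s * γ k)) (pe * (X * pe) ^ k),
      map_mul (aeval (a1 * b)) pe ((X * pe) ^ k), aeval_C, Algebra.algebraMap_eq_smul_one,
      smul_mul_assoc, one_mul, Matrix.smul_mul]
  rw [Finset.sum_congr rfl fun k _ => hterm k, ← Matrix.sum_mul, ← map_sum]
  set R := ∑ k ∈ Finset.range N, C (s * γ k) * (pe * (X * pe) ^ k) with hR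
  have hXR : (X : ℂ[X]) * R = (X * qe).comp (X * pe) := by
    rw [hqe, mul_comp, X_comp, Polynomial.sum_comp, hR, Finset.mul_sum, Finset.mul_sum]
    refine Finset.sum_congr rfl fun k _ => ?_
    rw [mul_comp, C_comp, X_pow_comp]
    ring
  have hRcoeff : ∀ j, j < N → R.coeff j = if j = 0 then 1 else 0 := by
    intro j hj
    have h := hcomp (j + 1) (by omega)
    rw [← hXR, coeff_X_mul, coeff_X] at h
    rw [h]
    by_cases hj0 : j = 0
    · simp [hj0]
    · rw [if_neg (by omega), if_neg hj0]
  have hMa : ∀ j, N ≤ j → ((a1 * b) ^ j) * a1 = 0 := by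
    intro j hj
    rw [← shunt a1 b j, pow_eq_zero_of_le hj h0, Matrix.mul_zero]
  have hdeg : R.natDegree < max (R.natDegree + 1) N :=
    lt_of_lt_of_le (Nat.lt_succ_self _) (le_max_left _ _)
  rw [aeval_eq_sum_range' hdeg, Matrix.sum_mul]
  rw [Finset.sum_congr rfl fun k (_ : k ∈ Finset.range (max (R.natDegree + 1) N)) =>
    Matrix.smul_mul (R.coeff k) ((a1 * b) ^ k) a1]
  rw [← Finset.sum_subset (Finset.range_subset_range.2 (le_max_right (R.natDegree + 1) N))
    (fun k _ hk2 => by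
      rw [hMa k (le_of_not_gt fun h => hk2 (Finset.mem_range.2 h)), smul_zero])]
  rw [Finset.sum_eq_single 0
    (fun j hj hj0 => by rw [hRcoeff j (Finset.mem_range.1 hj), if_neg hj0, zero_smul])
    (fun h => absurd (Finset.mem_range.2 hN) h)]
  rw [hRcoeff 0 hN, if_pos rfl, pow_zero, Matrix.one_mul, one_smul]

end Matrices

end CqAux

open CqAux Polynomial Finset in
/-- For a representation of the cyclic quiver `Q_m` (arrows `a₁ : V_m → V_1` and
`b = a_m⋯a₂ : V_1 → V_m` the composite of the other arrows, which are left unchanged)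
with nilpotent cycle `a_m⋯a₁ = b a₁`, the exponential and logarithm constructions on
`a₁` are mutually inverse. -/
theorem stmt_5 (d1 dm : ℕ) (a1 : Matrix (Fin d1) (Fin dm) ℂ)
    (b : Matrix (Fin dm) (Fin d1) ℂ) (hnil : IsNilpotent (b * a1)) :
    cqLog b (cqExp b a1) = a1 ∧ cqExp b (cqLog b a1) = a1 := by
  obtain ⟨n, hn⟩ := hnil
  have h0 : (b * a1) ^ (n + 1) = 0 := by rw [pow_succ, hn, Matrix.zero_mul]
  have hN : 0 < n + 1 := Nat.succ_pos n
  have hc : (2 * π * I : ℂ) ≠ 0 :=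
    mul_ne_zero (mul_ne_zero two_ne_zero (ofReal_ne_zero.2 Real.pi_ne_zero)) I_ne_zero
  have hPe : (∑ k ∈ range (n + 1),
      C ((1 : ℂ) * ((2 * π * I) ^ (k + 1) / ((k + 1)! : ℂ))) * X ^ k) = Pe (2 * π * I) (n + 1) := by
    rw [Pe]
    exact Finset.sum_congr rfl fun k _ => by rw [one_mul]
  constructor
  · have e1 := rep a1 b (n + 1) h0 1 (fun k => (2 * π * I) ^ (k + 1) / ((k + 1)! : ℂ))
    rw [one_smul, hPe] at e1
    have e1' : cqExp b a1 = aeval (a1 * b) (Pe (2 * π * I) (n + 1)) * a1 := e1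
    rw [e1']
    exact glue a1 b (n + 1) hN h0 (1 / (2 * π * I)) (fun k => (-1) ^ k / ((k + 1 : ℕ) : ℂ))
      (Pe (2 * π * I) (n + 1)) (Qe (2 * π * I) (n + 1)) rfl (comp_QP (2 * π * I) (n + 1) hc)
  · have e2 : cqLog b a1 = aeval (a1 * b) (Qe (2 * π * I) (n + 1)) * a1 :=
      rep a1 b (n + 1) h0 (1 / (2 * π * I)) (fun k => (-1) ^ k / ((k + 1 : ℕ) : ℂ))
    rw [e2]
    have g2 := glue a1 b (n + 1) hN h0 1 (fun k => (2 * π * I) ^ (k + 1) / ((k + 1)! : ℂ))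
      (Qe (2 * π * I) (n + 1)) (Pe (2 * π * I) (n + 1)) hPe.symm
      (comp_PQ (2 * π * I) (n + 1) hc)
    rw [one_smul] at g2
    exact g2
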